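/- Let I be a segment set of S_n (a union of pairwise strongly disjoint segments, i.e., a subset of the adjacency set of some permutation) with m adjacencies and k segments (maximal connected components). Then the number of permutations in S_n whose adjacency set contains I equals 2^k · (n - m)!. -/

import Mathlib

open Finset

/-- The set of adjacencies of a permutation of `{1,...,n}`: unordered pairs of
consecutive entries. -/
def bpAdj {n : ℕ} (x : Equiv.Perm (Fin n)) : Finset (Sym2 (Fin n)) :=
  Finset.image (fun i : Fin (n - 1) =>
    s(x ⟨i.val, by have := i.isLt; omega⟩, x ⟨i.val + 1, by have := i.isLt; omega⟩))
    Finset.univ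

/-- The breakpoint distance `d(x,y) = (n-1) - |A_x ∩ A_y|`. -/
def bpDist {n : ℕ} (x y : Equiv.Perm (Fin n)) : ℕ :=
  (n - 1) - (bpAdj x ∩ bpAdj y).card

/-- Total breakpoint distance of `z` to a finite set `X`. -/
def bpTotal {n : ℕ} (z : Equiv.Perm (Fin n)) (X : Finset (Equiv.Perm (Fin n))) : ℕ :=
  ∑ y ∈ X, bpDist z y

/-- `π` is a breakpoint median of `X`: it minimizes the total breakpoint distance to `X`. -/
def IsBpMedian {n : ℕ} (π : Equiv.Perm (Fin n)) (X : Finset (Equiv.Perm (Fin n))) : Prop :=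
  ∀ σ : Equiv.Perm (Fin n), bpTotal π X ≤ bpTotal σ X


/-- The number of segments (connected components) of a segment set `I`, i.e. the
number of connected components of the graph with edge set I meeting some edge of I. -/
noncomputable def numSegments {n : ℕ} (I : Finset (Sym2 (Fin n))) : ℕ :=
  Nat.card {c : (SimpleGraph.fromEdgeSet (↑I : Set (Sym2 (Fin n)))).ConnectedComponent //
    ∃ v : Fin n, (∃ e ∈ I, v ∈ e) ∧
      (SimpleGraph.fromEdgeSet (↑I : Set (Sym2 (Fin n)))).connectedComponentMk v = c}

section SegmentCounting

open List

set_option linter.unusedSectionVars false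

variable {α : Type*} [DecidableEq α]


/-- The list of adjacent (unordered) pairs of a list. -/
def segAP (l : List α) : List (Sym2 α) := (l.zip l.tail).map fun p => s(p.1, p.2)

@[simp] lemma segAP_nil : segAP ([] : List α) = [] := rfl
@[simp] lemma segAP_single (x : α) : segAP [x] = [] := rfl
@[simp] lemma segAP_cons_cons (x y : α) (t : List α) :
    segAP (x :: y :: t) = s(x, y) :: segAP (y :: t) := rfl

lemma segAP_length (l : List α) : (segAP l).length = l.length - 1 := by
  simp only [segAP, List.length_map, List.length_zip, List.length_tail]; omega

lemma segAP_getElem (l : List α) (j : ℕ) (h : j < (segAP l).length) :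
    (segAP l)[j] = s(l[j]'(by have := segAP_length l; omega),
      l[j+1]'(by have := segAP_length l; omega)) := by
  have hz : j < (l.zip l.tail).length := by simpa [segAP] using h
  simp only [segAP, List.getElem_map, List.getElem_zip, List.getElem_tail]

lemma mem_segAP_iff_getElem {l : List α} {f : Sym2 α} :
    f ∈ segAP l ↔ ∃ j, ∃ h : j + 1 < l.length,
      f = s(l[j]'(by omega), l[j+1]'h) := by
  rw [List.mem_iff_getElem]
  constructor
  · rintro ⟨j, h, rfl⟩
    exact ⟨j, by have := segAP_length l; omega, segAP_getElem l j h⟩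
  · rintro ⟨j, h, rfl⟩
    exact ⟨j, by have := segAP_length l; omega, segAP_getElem l j _⟩

lemma mem_segAP_of_cons {l : List α} {f : Sym2 α} (c : α) (h : f ∈ segAP l) :
    f ∈ segAP (c :: l) := by
  cases l with
  | nil => simp at h
  | cons d t => simp only [segAP_cons_cons]; exact List.mem_cons_of_mem _ h

lemma mem_segAP_append_of_left {p : List α} (r : List α) {f : Sym2 α} (h : f ∈ segAP p) :
    f ∈ segAP (p ++ r) := by
  induction p with
  | nil => simp at h
  | cons c t ih =>
    cases t with
    | nil => simp at h
    | cons d t' =>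
      simp only [segAP_cons_cons, List.mem_cons] at h
      rcases h with rfl | h
      · simp
      · exact mem_segAP_of_cons c (ih h)

lemma mem_segAP_append_of_right (p : List α) {r : List α} {f : Sym2 α} (h : f ∈ segAP r) :
    f ∈ segAP (p ++ r) := by
  induction p with
  | nil => simpa using h
  | cons c t ih => exact mem_segAP_of_cons c ih

lemma mem_segAP_append_middle (u v : List α) (x y : α) :
    s(x, y) ∈ segAP (u ++ x :: y :: v) := by
  apply mem_segAP_append_of_right
  simp

lemma mem_segAP_iff_append {l : List α} {f : Sym2 α} :
    f ∈ segAP l ↔ ∃ u v x y, l = u ++ x :: y :: v ∧ f = s(x, y) := by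
  constructor
  · rw [mem_segAP_iff_getElem]
    rintro ⟨j, h, rfl⟩
    refine ⟨l.take j, l.drop (j + 2), _, _, ?_, rfl⟩
    conv_lhs => rw [← List.take_append_drop j l]
    rw [List.drop_eq_getElem_cons (by omega), List.drop_eq_getElem_cons (by omega)]
  · rintro ⟨u, v, x, y, rfl, rfl⟩
    exact mem_segAP_append_middle u v x y

/-- Master splitting lemma: how an adjacent pair sits relative to a distinguished element. -/
lemma split3 {p q u v : List α} {a x y : α} (h : p ++ a :: q = u ++ x :: y :: v) :
    (∃ w, p = u ++ x :: y :: w) ∨ (∃ w, q = w ++ x :: y :: v) ∨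
      (x = a ∧ u = p ∧ q = y :: v) ∨ (y = a ∧ p = u ++ [x] ∧ v = q) := by
  rcases List.append_eq_append_iff.mp h with ⟨w, hw1, hw2⟩ | ⟨w, hw1, hw2⟩
  · -- u = p ++ w, a :: q = w ++ x :: y :: v
    cases w with
    | nil =>
      simp only [List.nil_append] at hw2
      obtain ⟨rfl, rfl⟩ : x = a ∧ q = y :: v := by
        injection hw2 with h1 h2; exact ⟨h1.symm, h2⟩
      right; right; left; exact ⟨rfl, by simpa using hw1, rfl⟩
    | cons c w' =>
      obtain ⟨hc, hq⟩ : a = c ∧ q = w' ++ x :: y :: v := by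
        injection hw2 with h1 h2; exact ⟨h1, h2⟩
      right; left; exact ⟨w', hq⟩
  · -- p = u ++ w, x :: y :: v = w ++ a :: q
    cases w with
    | nil =>
      simp only [List.nil_append] at hw2
      obtain ⟨rfl, rfl⟩ : x = a ∧ q = y :: v := by
        injection hw2 with h1 h2; exact ⟨h1, h2.symm⟩
      right; right; left; exact ⟨rfl, by simpa using hw1.symm, rfl⟩
    | cons c w' =>
      obtain ⟨rfl, hw2'⟩ : x = c ∧ y :: v = w' ++ a :: q := by
        injection hw2 with h1 h2; exact ⟨h1, h2⟩
      cases w' with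
      | nil =>
        obtain ⟨rfl, rfl⟩ : y = a ∧ v = q := by
          injection hw2' with h1 h2; exact ⟨h1, h2⟩
        right; right; right; exact ⟨rfl, by simpa using hw1, rfl⟩
      | cons d w'' =>
        obtain ⟨rfl, hv⟩ : y = d ∧ v = w'' ++ a :: q := by
          injection hw2' with h1 h2; exact ⟨h1, h2⟩
        left; exact ⟨w'', by simpa using hw1⟩

lemma not_mem_of_nodup_middle {p q : List α} {a : α} (h : (p ++ a :: q).Nodup) :
    a ∉ p ∧ a ∉ q := by
  rw [List.nodup_middle, List.nodup_cons, List.mem_append] at h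
  exact ⟨fun hp => h.1 (Or.inl hp), fun hq => h.1 (Or.inr hq)⟩

/-- In a nodup list, the split at an element is unique. -/
lemma nodup_split_unique {p q p' q' : List α} {a : α} (h : (p ++ a :: q).Nodup)
    (he : p ++ a :: q = p' ++ a :: q') : p = p' ∧ q = q' := by
  have hap : a ∉ p := (not_mem_of_nodup_middle h).1
  have hap' : a ∉ p' := (not_mem_of_nodup_middle (he ▸ h)).1
  rcases List.append_eq_append_iff.mp he with ⟨w, hw1, hw2⟩ | ⟨w, hw1, hw2⟩
  · cases w with
    | nil => simp at hw1 hw2; exact ⟨by simp [hw1], by simp [hw2]⟩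
    | cons c w' =>
      exfalso
      obtain ⟨rfl, -⟩ : a = c ∧ q = w' ++ a :: q' := by
        injection hw2 with h1 h2; exact ⟨h1, h2⟩
      exact hap' (hw1 ▸ (by simp : a ∈ p ++ a :: w'))
  · cases w with
    | nil => simp at hw1 hw2; exact ⟨by simp [hw1], by simp [hw2]⟩
    | cons c w' =>
      exfalso
      obtain ⟨rfl, -⟩ : a = c ∧ q' = w' ++ a :: q := by
        injection hw2 with h1 h2; exact ⟨h1, h2⟩
      exact hap (hw1 ▸ (by simp : a ∈ p' ++ a :: w'))

lemma erase_middle {u v : List α} {b : α} (h : (u ++ b :: v).Nodup) :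
    (u ++ b :: v).erase b = u ++ v := by
  rw [List.erase_append_right _ (not_mem_of_nodup_middle h).1, List.erase_cons_head]

/-- An adjacent pair not containing `b` survives erasing `b`. -/
lemma mem_segAP_append_of_mem_middle {u v : List α} {b x y : α}
    (h : s(x, y) ∈ segAP (u ++ b :: v)) (hx : x ≠ b) (hy : y ≠ b) :
    s(x, y) ∈ segAP (u ++ v) := by
  rw [mem_segAP_iff_append] at h
  obtain ⟨u', v', x', y', he, hf⟩ := h
  rcases Sym2.eq_iff.mp hf with ⟨rfl, rfl⟩ | ⟨rfl, rfl⟩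
  · rcases split3 he with ⟨w, rfl⟩ | ⟨w, rfl⟩ | ⟨rfl, -, -⟩ | ⟨rfl, -, -⟩
    · rw [List.append_assoc]; exact mem_segAP_append_middle _ _ _ _
    · rw [← List.append_assoc]; exact mem_segAP_append_middle _ _ _ _
    · exact absurd rfl hx
    · exact absurd rfl hy
  · rcases split3 he with ⟨w, rfl⟩ | ⟨w, rfl⟩ | ⟨rfl, -, -⟩ | ⟨rfl, -, -⟩
    · rw [List.append_assoc, Sym2.eq_swap]; exact mem_segAP_append_middle _ _ _ _
    · rw [← List.append_assoc, Sym2.eq_swap]; exact mem_segAP_append_middle _ _ _ _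
    · exact absurd rfl hy
    · exact absurd rfl hx

/-- Neighbor characterization: in a nodup list split as `p ++ a :: q`, any adjacent pair
containing `a` pairs it with the last of `p` or the head of `q`. -/
lemma segAP_neighbor {p q : List α} {a z : α} (hnd : (p ++ a :: q).Nodup)
    (h : s(a, z) ∈ segAP (p ++ a :: q)) (hza : z ≠ a) :
    (∃ w, p = w ++ [z]) ∨ (∃ w, q = z :: w) := by
  rw [mem_segAP_iff_append] at h
  obtain ⟨u, v, x, y, he, hf⟩ := h
  have hap : a ∉ p := (not_mem_of_nodup_middle hnd).1
  have haq : a ∉ q := (not_mem_of_nodup_middle hnd).2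
  rcases Sym2.eq_iff.mp hf with ⟨rfl, rfl⟩ | ⟨rfl, rfl⟩
  · -- x = a, y = z
    rcases split3 he with ⟨w, hw⟩ | ⟨w, hw⟩ | ⟨-, -, hq⟩ | ⟨hya, -, -⟩
    · exact absurd (hw ▸ (by simp : a ∈ u ++ a :: z :: w)) hap
    · exact absurd (hw ▸ (by simp : a ∈ w ++ a :: z :: v)) haq
    · right; exact ⟨v, hq⟩
    · exact absurd hya hza
  · -- x = z, y = a
    rcases split3 he with ⟨w, hw⟩ | ⟨w, hw⟩ | ⟨hxa, -, -⟩ | ⟨-, hp, -⟩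
    · exact absurd (hw ▸ (by simp : a ∈ u ++ z :: a :: w)) hap
    · exact absurd (hw ▸ (by simp : a ∈ w ++ z :: a :: v)) haq
    · exact absurd hxa hza
    · left; exact ⟨u, hp⟩


/-- The set of vertices covered by a finite set of unordered pairs. -/
def sverts (E : Finset (Sym2 α)) : Finset α :=
  E.sup fun f => Sym2.lift ⟨fun x y => {x, y}, fun x y => Finset.pair_comm x y⟩ f

lemma mem_sverts {E : Finset (Sym2 α)} {v : α} :
    v ∈ sverts E ↔ ∃ f ∈ E, v ∈ f := by
  rw [sverts, Finset.mem_sup]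
  refine exists_congr fun f => and_congr_right fun hf => ?_
  induction f with
  | _ x y => simp [Sym2.mem_iff]

/-- A list realizes the ground set `V` and contains all adjacencies in `E`. -/
def GoodL (V : Finset α) (E : Finset (Sym2 α)) (l : List α) : Prop :=
  l.Nodup ∧ l.toFinset = V ∧ ∀ f ∈ E, f ∈ segAP l

instance (V : Finset α) (E : Finset (Sym2 α)) : DecidablePred (GoodL V E) := fun l => by
  unfold GoodL; infer_instance

noncomputable def goodFinset (V : Finset α) (E : Finset (Sym2 α)) : Finset (List α) :=
  (V.toList.permutations).toFinset.filter (GoodL V E)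

lemma GoodL.perm {V : Finset α} {E : Finset (Sym2 α)} {l : List α} (h : GoodL V E l) :
    l ~ V.toList := by
  have h1 : l.toFinset = V.toList.toFinset := by rw [h.2.1, Finset.toList_toFinset]
  rw [List.toFinset_eq_iff_perm_dedup, h.1.dedup, (Finset.nodup_toList V).dedup] at h1
  exact h1

lemma mem_goodFinset {V : Finset α} {E : Finset (Sym2 α)} {l : List α} :
    l ∈ goodFinset V E ↔ GoodL V E l := by
  rw [goodFinset, Finset.mem_filter, List.mem_toFinset, List.mem_permutations]
  exact ⟨fun h => h.2, fun h => ⟨h.perm, h⟩⟩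

lemma mem_segAP_reverse_aux {l : List α} {f : Sym2 α} (h : f ∈ segAP l) :
    f ∈ segAP l.reverse := by
  rw [mem_segAP_iff_append] at h
  obtain ⟨u, v, x, y, rfl, rfl⟩ := h
  have : (u ++ x :: y :: v).reverse = v.reverse ++ y :: x :: u.reverse := by simp
  rw [this, Sym2.eq_swap]
  exact mem_segAP_append_middle _ _ _ _

lemma mem_segAP_reverse {l : List α} {f : Sym2 α} :
    f ∈ segAP l.reverse ↔ f ∈ segAP l :=
  ⟨fun h => by simpa using mem_segAP_reverse_aux h, mem_segAP_reverse_aux⟩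

lemma GoodL_reverse {V : Finset α} {E : Finset (Sym2 α)} {l : List α} :
    GoodL V E l.reverse ↔ GoodL V E l := by
  unfold GoodL
  simp only [List.nodup_reverse, List.toFinset_reverse]
  refine and_congr_right fun _ => and_congr_right fun _ => ?_
  exact forall₂_congr fun f _ => mem_segAP_reverse

lemma goodCount_empty (V : Finset α) : (goodFinset V (∅ : Finset (Sym2 α))).card = Nat.factorial V.card := by
  have hnd := Finset.nodup_toList V
  have heq : goodFinset V ∅ = (V.toList.permutations).toFinset := by
    apply Finset.filter_true_of_mem
    intro l hl
    rw [List.mem_toFinset, List.mem_permutations] at hl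
    refine ⟨hl.nodup_iff.mpr hnd, ?_, by simp⟩
    rw [List.toFinset_eq_of_perm _ _ hl, Finset.toList_toFinset]
  rw [heq, List.toFinset_card_of_nodup (List.nodup_permutations _ hnd),
    List.length_permutations, Finset.length_toList]

lemma exists_pendant {L : List α} (hL : L.Nodup) {E : Finset (Sym2 α)}
    (hE : ∀ f ∈ E, f ∈ segAP L) (hne : E.Nonempty) :
    ∃ a b : α, a ≠ b ∧ s(a, b) ∈ E ∧ (∀ f ∈ E, b ∈ f → f = s(a, b)) ∧
      (∀ f g, f ∈ E.erase s(a, b) → g ∈ E.erase s(a, b) → a ∈ f → a ∈ g → f = g) := by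
  classical
  set A := segAP L with hA
  set T : Finset ℕ := (Finset.range A.length).filter
    (fun j => if h : j < A.length then A[j] ∈ E else False) with hT
  have hmemT : ∀ j, j ∈ T ↔ ∃ h : j < A.length, A[j] ∈ E := by
    intro j
    rw [hT, Finset.mem_filter, Finset.mem_range]
    constructor
    · rintro ⟨h1, h2⟩; rw [dif_pos h1] at h2; exact ⟨h1, h2⟩
    · rintro ⟨h1, h2⟩; exact ⟨h1, by rw [dif_pos h1]; exact h2⟩
  have hTne : T.Nonempty := by
    obtain ⟨f, hf⟩ := hne
    obtain ⟨j, hj, hjf⟩ := List.mem_iff_getElem.mp (hE f hf)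
    exact ⟨j, (hmemT j).mpr ⟨hj, hjf ▸ hf⟩⟩
  set i := T.max' hTne with hi
  obtain ⟨hiA, hie⟩ := (hmemT i).mp (T.max'_mem hTne)
  have hlen := segAP_length L
  have hi1 : i + 1 < L.length := by rw [hA] at hiA; omega
  have hmax : ∀ j (h : j < A.length), A[j] ∈ E → j ≤ i :=
    fun j h hj => T.le_max' j ((hmemT j).mpr ⟨h, hj⟩)
  have hgetE : ∀ j (h : j + 1 < L.length), s(L[j], L[j+1]) ∈ E → j ≤ i := by
    intro j h hj
    have hjA : j < A.length := by rw [hA]; omega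
    have h2 : A[j] = s(L[j], L[j+1]) := segAP_getElem L j hjA
    exact hmax j hjA (h2.symm ▸ hj)
  refine ⟨L[i], L[i+1], ?_, ?_, ?_, ?_⟩
  · intro h
    have := hL.getElem_inj_iff.mp h
    omega
  · have := segAP_getElem L i (hA ▸ hiA)
    rw [hA] at hiA
    rw [← this]; exact hie
  · intro f hf hbf
    obtain ⟨j, hj, hjf⟩ := mem_segAP_iff_getElem.mp (hE f hf)
    have hji : j ≤ i := hgetE j hj (hjf ▸ hf)
    rcases Sym2.mem_iff.mp (hjf ▸ hbf) with h1 | h2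
    · exact absurd (hL.getElem_inj_iff.mp h1) (by omega)
    · have : i + 1 = j + 1 := hL.getElem_inj_iff.mp h2
      have hji' : j = i := by omega
      subst hji'
      rw [hjf]
  · have key : ∀ f ∈ E.erase s(L[i], L[i+1]), L[i] ∈ f →
        ∃ j, ∃ h : j + 1 < L.length, j + 1 = i ∧ f = s(L[j], L[j+1]) := by
      intro f hf haf
      have hfE : f ∈ E := Finset.mem_of_mem_erase hf
      have hfne : f ≠ s(L[i], L[i+1]) := Finset.ne_of_mem_erase hf
      obtain ⟨j, hj, hjf⟩ := mem_segAP_iff_getElem.mp (hE f hfE)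
      have hji : j ≤ i := hgetE j hj (hjf ▸ hfE)
      rcases Sym2.mem_iff.mp (hjf ▸ haf) with h1 | h2
      · exfalso
        have : i = j := hL.getElem_inj_iff.mp h1
        subst this
        exact hfne hjf
      · have : i = j + 1 := hL.getElem_inj_iff.mp h2
        exact ⟨j, hj, this.symm, hjf⟩
    intro f g hf hg haf hag
    obtain ⟨j, hj, hji, hjf⟩ := key f hf haf
    obtain ⟨j', hj', hji', hjg⟩ := key g hg hag
    have : j = j' := by omega
    subst this
    rw [hjf, hjg]

lemma mem_of_mem_segAP {l : List α} {f : Sym2 α} (h : f ∈ segAP l) {x : α} (hx : x ∈ f) :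
    x ∈ l := by
  obtain ⟨u, v, c, d, rfl, rfl⟩ := mem_segAP_iff_append.mp h
  rcases Sym2.mem_iff.mp hx with rfl | rfl <;> simp

lemma not_diag_mem_segAP {l : List α} (hnd : l.Nodup) (z : α) : s(z, z) ∉ segAP l := by
  intro h
  obtain ⟨u, v, x, y, heq, hf⟩ := mem_segAP_iff_append.mp h
  have hxy : x = z ∧ y = z := by
    rcases Sym2.eq_iff.mp hf with ⟨h1, h2⟩ | ⟨h1, h2⟩
    · exact ⟨h1.symm, h2.symm⟩
    · exact ⟨h2.symm, h1.symm⟩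
  obtain ⟨hx, hy⟩ := hxy
  rw [heq, hx, hy] at hnd
  exact (not_mem_of_nodup_middle hnd).2 List.mem_cons_self

lemma sverts_mono {E E' : Finset (Sym2 α)} (h : E' ⊆ E) : sverts E' ⊆ sverts E := by
  intro v hv
  obtain ⟨f, hf, hvf⟩ := mem_sverts.mp hv
  exact mem_sverts.mpr ⟨f, h hf, hvf⟩

section Pendant

variable {V : Finset α} {E : Finset (Sym2 α)} {a b : α}

lemma sverts_erase_deg2 (hab : a ≠ b) (he : s(a, b) ∈ E)
    (hb : ∀ f ∈ E, b ∈ f → f = s(a, b)) (hd : ∃ f ∈ E.erase s(a, b), a ∈ f) :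
    sverts (E.erase s(a, b)) = (sverts E).erase b := by
  ext v
  rw [mem_sverts, Finset.mem_erase, mem_sverts]
  constructor
  · rintro ⟨f, hf, hvf⟩
    refine ⟨?_, f, Finset.mem_of_mem_erase hf, hvf⟩
    rintro rfl
    exact Finset.ne_of_mem_erase hf (hb f (Finset.mem_of_mem_erase hf) hvf)
  · rintro ⟨hvb, f, hf, hvf⟩
    by_cases hfe : f = s(a, b)
    · subst hfe
      rcases Sym2.mem_iff.mp hvf with rfl | rfl
      · obtain ⟨g, hg, hag⟩ := hd
        exact ⟨g, hg, hag⟩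
      · exact absurd rfl hvb
    · exact ⟨f, Finset.mem_erase.mpr ⟨hfe, hf⟩, hvf⟩

lemma sverts_erase_deg1 (hab : a ≠ b) (he : s(a, b) ∈ E)
    (hb : ∀ f ∈ E, b ∈ f → f = s(a, b)) (hd : ¬ ∃ f ∈ E.erase s(a, b), a ∈ f) :
    sverts (E.erase s(a, b)) = sverts E \ {a, b} := by
  ext v
  rw [mem_sverts, Finset.mem_sdiff, mem_sverts]
  constructor
  · rintro ⟨f, hf, hvf⟩
    refine ⟨⟨f, Finset.mem_of_mem_erase hf, hvf⟩, ?_⟩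
    intro hv
    rcases Finset.mem_insert.mp hv with rfl | hv
    · exact hd ⟨f, hf, hvf⟩
    · rw [Finset.mem_singleton] at hv
      subst hv
      exact Finset.ne_of_mem_erase hf (hb f (Finset.mem_of_mem_erase hf) hvf)
  · rintro ⟨⟨f, hf, hvf⟩, hvab⟩
    have hva : v ≠ a := fun h => hvab (by simp [h])
    have hvb : v ≠ b := fun h => hvab (by simp [h])
    refine ⟨f, Finset.mem_erase.mpr ⟨?_, hf⟩, hvf⟩
    rintro rfl
    rcases Sym2.mem_iff.mp hvf with rfl | rfl
    · exact hva rfl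
    · exact hvb rfl

lemma GoodL_erase (hab : a ≠ b) (he : s(a, b) ∈ E)
    (hb : ∀ f ∈ E, b ∈ f → f = s(a, b)) {l : List α} (hgood : GoodL V E l) :
    GoodL (V.erase b) (E.erase s(a, b)) (l.erase b) := by
  obtain ⟨hnd, hfin, hadj⟩ := hgood
  have hbl : b ∈ l := mem_of_mem_segAP (hadj _ he) (by simp)
  obtain ⟨u, v, rfl⟩ := List.mem_iff_append.mp hbl
  have her : (u ++ b :: v).erase b = u ++ v := erase_middle hnd
  have hbu : b ∉ u := (not_mem_of_nodup_middle hnd).1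
  have hbv : b ∉ v := (not_mem_of_nodup_middle hnd).2
  refine ⟨hnd.erase b, ?_, ?_⟩
  · rw [her, ← hfin]
    ext x
    simp only [List.mem_toFinset, Finset.mem_erase, List.mem_append, List.mem_cons]
    constructor
    · rintro (hx | hx)
      · exact ⟨fun h => hbu (h ▸ hx), Or.inl hx⟩
      · exact ⟨fun h => hbv (h ▸ hx), Or.inr (Or.inr hx)⟩
    · rintro ⟨hxb, hx | rfl | hx⟩
      · exact Or.inl hx
      · exact absurd rfl hxb
      · exact Or.inr hx
  intro f hf
  have hfb : ∀ x ∈ f, x ≠ b := by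
    intro x hx hxb
    subst hxb
    exact Finset.ne_of_mem_erase hf (hb f (Finset.mem_of_mem_erase hf) hx)
  rw [her]
  induction f with
  | _ x y =>
    exact mem_segAP_append_of_mem_middle (hadj _ (Finset.mem_of_mem_erase hf))
      (hfb x (by simp)) (hfb y (by simp))

lemma good_insert {p q : List α} (hab : a ≠ b) (he : s(a, b) ∈ E) (hbV : b ∈ V)
    (hgood : GoodL (V.erase b) (E.erase s(a, b)) (p ++ a :: q))
    (hc : ∀ w c, p = w ++ [c] → s(c, a) ∉ E) :
    GoodL V E (p ++ b :: a :: q) := by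
  obtain ⟨hnd, hfin, hadj⟩ := hgood
  have hbl : b ∉ p ++ a :: q := by
    rw [← List.mem_toFinset, hfin]
    exact Finset.notMem_erase b V
  have hperm : p ++ b :: a :: q ~ b :: (p ++ a :: q) := List.perm_middle
  refine ⟨?_, ?_, ?_⟩
  · exact hperm.nodup_iff.mpr (List.nodup_cons.mpr ⟨hbl, hnd⟩)
  · rw [List.toFinset_eq_of_perm _ _ hperm, List.toFinset_cons, hfin, Finset.insert_erase hbV]
  · intro f hf
    by_cases hfe : f = s(a, b)
    · subst hfe
      rw [Sym2.eq_swap]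
      exact mem_segAP_append_middle p q b a
    · have hf' : f ∈ E.erase s(a, b) := Finset.mem_erase.mpr ⟨hfe, hf⟩
      obtain ⟨u, v, x, y, heq, rfl⟩ := mem_segAP_iff_append.mp (hadj f hf')
      rcases split3 heq with ⟨w, hw⟩ | ⟨w, hw⟩ | ⟨hxa, hu, hq⟩ | ⟨hya, hp, hv⟩
      · rw [show p ++ b :: a :: q = u ++ x :: y :: (w ++ b :: a :: q) by rw [hw]; simp]
        exact mem_segAP_append_middle _ _ _ _
      · rw [show p ++ b :: a :: q = (p ++ b :: a :: w) ++ x :: y :: v by rw [hw]; simp]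
        exact mem_segAP_append_middle _ _ _ _
      · subst hxa
        rw [show p ++ b :: x :: q = (p ++ [b]) ++ x :: q by simp, hq]
        exact mem_segAP_append_middle _ _ _ _
      · subst hya
        exact absurd hf (hc u x hp)

lemma good_insert_rev {p q : List α} (hab : a ≠ b)
    (hgood' : GoodL (V.erase b) (E.erase s(a, b)) (p ++ a :: q))
    (hgood : GoodL V E (p ++ b :: a :: q)) :
    ∀ w c, p = w ++ [c] → s(c, a) ∉ E := by
  intro w c hp hcE
  have hcp : c ∈ p := by rw [hp]; simp
  have hbp : b ∉ p ++ a :: q := by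
    rw [← List.mem_toFinset, hgood'.2.1]
    exact Finset.notMem_erase b V
  have hcb : c ≠ b := by
    rintro rfl
    exact hbp (List.mem_append.mpr (Or.inl hcp))
  have hap : a ∉ p := (not_mem_of_nodup_middle hgood'.1).1
  have hca : c ≠ a := fun h => hap (h ▸ hcp)
  have hl2 : p ++ b :: a :: q = (p ++ [b]) ++ a :: q := by simp
  have hadj : s(a, c) ∈ segAP ((p ++ [b]) ++ a :: q) := by
    rw [← hl2, Sym2.eq_swap]
    exact hgood.2.2 _ hcE
  have hnd2 : ((p ++ [b]) ++ a :: q).Nodup := by rw [← hl2]; exact hgood.1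
  rcases segAP_neighbor hnd2 hadj hca with ⟨w', hw'⟩ | ⟨w', hw'⟩
  · have hbc : b = c := (List.concat_inj.mp
      (by rw [List.concat_eq_append, List.concat_eq_append]; exact hw')).2
    exact hcb hbc.symm
  · have hnd' := hgood'.1
    rw [List.nodup_append'] at hnd'
    exact hnd'.2.2 hcp (by rw [hw']; simp)

lemma fiber_cases (hab : a ≠ b) (he : s(a, b) ∈ E) (hbV : b ∈ V)
    {l p q : List α} (hgood : GoodL V E l) (hndpq : (p ++ a :: q).Nodup)
    (hel : l.erase b = p ++ a :: q) :
    l = p ++ b :: a :: q ∨ l = p ++ a :: b :: q := by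
  have hbl : b ∈ l := by
    rw [← List.mem_toFinset, hgood.2.1]
    exact hbV
  obtain ⟨u, v, rfl⟩ := List.mem_iff_append.mp hbl
  have hnd := hgood.1
  have her : (u ++ b :: v).erase b = u ++ v := erase_middle hnd
  rw [her] at hel
  have hadj : s(b, a) ∈ segAP (u ++ b :: v) := by
    rw [Sym2.eq_swap]
    exact hgood.2.2 _ he
  have hnduv : (u ++ v).Nodup :=
    ((List.Sublist.append_left (List.sublist_cons_self b v) u)).nodup hnd
  rcases segAP_neighbor hnd hadj hab with ⟨w, hw⟩ | ⟨w, hw⟩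
  · subst hw
    have h2 : (w ++ [a]) ++ v = w ++ a :: v := by simp
    rw [h2] at hel
    have hnd3 : (w ++ a :: v).Nodup := by rw [← h2]; exact hnduv
    obtain ⟨rfl, rfl⟩ := nodup_split_unique hnd3 hel
    right; simp
  · subst hw
    obtain ⟨rfl, rfl⟩ := nodup_split_unique (by exact hnduv) hel
    left; rfl

lemma erase_middle₂ {p q : List α} (hnd : (p ++ a :: b :: q).Nodup) :
    (p ++ a :: b :: q).erase b = p ++ a :: q := by
  have h : p ++ a :: b :: q = (p ++ [a]) ++ b :: q := by simp
  rw [h, erase_middle (by rw [← h]; exact hnd)]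
  simp

lemma fiber_card (hab : a ≠ b) (he : s(a, b) ∈ E) (hbV : b ∈ V) (haV : a ∈ V)
    (hb : ∀ f ∈ E, b ∈ f → f = s(a, b))
    (ha : ∀ f g, f ∈ E.erase s(a, b) → g ∈ E.erase s(a, b) → a ∈ f → a ∈ g → f = g)
    {l' : List α} (hgood' : GoodL (V.erase b) (E.erase s(a, b)) l') :
    ((goodFinset V E).filter (fun l => l.erase b = l')).card
      = if ∃ f ∈ E.erase s(a, b), a ∈ f then 1 else 2 := by
  have hal' : a ∈ l' := by
    rw [← List.mem_toFinset, hgood'.2.1]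
    exact Finset.mem_erase.mpr ⟨hab, haV⟩
  obtain ⟨p, q, rfl⟩ := List.mem_iff_append.mp hal'
  have hnd' := hgood'.1
  have hap : a ∉ p := (not_mem_of_nodup_middle hnd').1
  have haq : a ∉ q := (not_mem_of_nodup_middle hnd').2
  have hdisj : ∀ x, x ∈ p → x ∈ q → False := fun x hxp hxq =>
    (List.nodup_append'.mp hnd').2.2 hxp (List.mem_cons_of_mem a hxq)
  have hbl' : b ∉ p ++ a :: q := by
    rw [← List.mem_toFinset, hgood'.2.1]
    exact Finset.notMem_erase b V
  have hmem : ∀ l, l ∈ (goodFinset V E).filter (fun l => l.erase b = p ++ a :: q) ↔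
      GoodL V E l ∧ l.erase b = p ++ a :: q := by
    intro l
    rw [Finset.mem_filter, mem_goodFinset]
  have hcases : ∀ l, GoodL V E l → l.erase b = p ++ a :: q →
      l = p ++ b :: a :: q ∨ l = p ++ a :: b :: q :=
    fun l hg hel => fiber_cases hab he hbV hg hnd' hel
  have hrev_good' : GoodL (V.erase b) (E.erase s(a, b)) (q.reverse ++ a :: p.reverse) := by
    rw [show q.reverse ++ a :: p.reverse = (p ++ a :: q).reverse by simp]
    exact GoodL_reverse.mpr hgood'
  have hgood₂_iff : GoodL V E (p ++ a :: b :: q) ↔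
      GoodL V E (q.reverse ++ b :: a :: p.reverse) := by
    rw [show q.reverse ++ b :: a :: p.reverse = (p ++ a :: b :: q).reverse by simp,
      GoodL_reverse]
  by_cases hd : ∃ f ∈ E.erase s(a, b), a ∈ f
  · rw [if_pos hd]
    obtain ⟨f₀, hf₀, haf₀⟩ := hd
    obtain ⟨z, rfl⟩ : ∃ z, f₀ = s(a, z) := ⟨Sym2.Mem.other haf₀, (Sym2.other_spec haf₀).symm⟩
    have hzadj : s(a, z) ∈ segAP (p ++ a :: q) := hgood'.2.2 _ hf₀
    have hza : z ≠ a := by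
      rintro rfl
      exact not_diag_mem_segAP hnd' z hzadj
    have hzE : s(z, a) ∈ E := by
      rw [Sym2.eq_swap]
      exact Finset.mem_of_mem_erase hf₀
    -- uniqueness helper: any edge of E.erase at a equals s(a,z)
    have huniq : ∀ c, c ≠ b → s(c, a) ∈ E → c = z := by
      intro c hcb hcE
      have hcne : s(c, a) ≠ s(a, b) := by
        intro hEq
        rcases Sym2.eq_iff.mp hEq with ⟨-, h2⟩ | ⟨h1, -⟩
        · exact hab h2
        · exact hcb h1
      have hceq := ha _ _ (Finset.mem_erase.mpr ⟨hcne, hcE⟩) hf₀ (by simp) (by simp)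
      rcases Sym2.eq_iff.mp hceq with ⟨-, h2⟩ | ⟨h1, -⟩
      · exact absurd h2.symm hza
      · exact h1
    rcases segAP_neighbor hnd' hzadj hza with ⟨w, hw⟩ | ⟨w, hw⟩
    · -- z is the last of p : the unique good extension is p ++ a :: b :: q
      have hzp : z ∈ p := by rw [hw]; simp
      have hg₂ : GoodL V E (p ++ a :: b :: q) := by
        rw [hgood₂_iff]
        apply good_insert hab he hbV hrev_good'
        intro w' c hqr hcE
        have hcq : c ∈ q := by
          have : c ∈ q.reverse := by rw [hqr]; simp
          simpa using this
        have hcb : c ≠ b := by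
          rintro rfl
          exact hbl' (by simp [hcq])
        exact hdisj z hzp ((huniq c hcb hcE) ▸ hcq)
      have hg₁ : ¬ GoodL V E (p ++ b :: a :: q) := fun hg =>
        good_insert_rev hab hgood' hg w z hw hzE
      have hset : (goodFinset V E).filter (fun l => l.erase b = p ++ a :: q)
          = {p ++ a :: b :: q} := by
        apply Finset.eq_singleton_iff_unique_mem.mpr
        constructor
        · rw [hmem]
          exact ⟨hg₂, erase_middle₂ hg₂.1⟩
        · intro l hl
          rw [hmem] at hl
          rcases hcases l hl.1 hl.2 with rfl | rfl
          · exact absurd hl.1 hg₁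
          · rfl
      rw [hset, Finset.card_singleton]
    · -- z is the head of q : the unique good extension is p ++ b :: a :: q
      have hzq : z ∈ q := by rw [hw]; simp
      have hg₁ : GoodL V E (p ++ b :: a :: q) := by
        apply good_insert hab he hbV hgood'
        intro w' c hp hcE
        have hcp : c ∈ p := by rw [hp]; simp
        have hcb : c ≠ b := by
          rintro rfl
          exact hbl' (by simp [hcp])
        exact hdisj c hcp ((huniq c hcb hcE) ▸ hzq)
      have hg₂ : ¬ GoodL V E (p ++ a :: b :: q) := by
        intro hg
        rw [hgood₂_iff] at hg
        refine good_insert_rev hab hrev_good' hg w.reverse z (by rw [hw]; simp) hzE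
      have hset : (goodFinset V E).filter (fun l => l.erase b = p ++ a :: q)
          = {p ++ b :: a :: q} := by
        apply Finset.eq_singleton_iff_unique_mem.mpr
        constructor
        · rw [hmem]
          exact ⟨hg₁, erase_middle hg₁.1⟩
        · intro l hl
          rw [hmem] at hl
          rcases hcases l hl.1 hl.2 with rfl | rfl
          · rfl
          · exact absurd hl.1 hg₂
      rw [hset, Finset.card_singleton]
  · rw [if_neg hd]
    have key : ∀ c, c ≠ b → s(c, a) ∉ E := by
      intro c hcb hcE
      apply hd
      refine ⟨s(c, a), Finset.mem_erase.mpr ⟨?_, hcE⟩, by simp⟩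
      intro hEq
      rcases Sym2.eq_iff.mp hEq with ⟨-, h2⟩ | ⟨h1, -⟩
      · exact hab h2
      · exact hcb h1
    have hg₁ : GoodL V E (p ++ b :: a :: q) := by
      apply good_insert hab he hbV hgood'
      intro w c hp
      have hcp : c ∈ p := by rw [hp]; simp
      apply key c
      rintro rfl
      exact hbl' (by simp [hcp])
    have hg₂ : GoodL V E (p ++ a :: b :: q) := by
      rw [hgood₂_iff]
      apply good_insert hab he hbV hrev_good'
      intro w c hqr
      have hcq : c ∈ q := by
        have h2 : c ∈ q.reverse := by rw [hqr]; simp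
        simpa using h2
      apply key c
      rintro rfl
      exact hbl' (by simp [hcq])
    have hne12 : p ++ b :: a :: q ≠ p ++ a :: b :: q := by
      intro h
      have h2 := List.append_cancel_left h
      injection h2 with h3 _
      exact hab h3.symm
    have hset : (goodFinset V E).filter (fun l => l.erase b = p ++ a :: q)
        = {p ++ b :: a :: q, p ++ a :: b :: q} := by
      ext l
      rw [hmem, Finset.mem_insert, Finset.mem_singleton]
      constructor
      · rintro ⟨hg, hel⟩
        exact hcases l hg hel
      · rintro (rfl | rfl)
        exacts [⟨hg₁, erase_middle hg₁.1⟩, ⟨hg₂, erase_middle₂ hg₂.1⟩]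
    rw [hset, Finset.card_insert_of_notMem (by simpa using hne12), Finset.card_singleton]

end Pendant

lemma card_lt_sverts (L : List α) (hL : L.Nodup) :
    ∀ E : Finset (Sym2 α), (∀ f ∈ E, f ∈ segAP L) → E.Nonempty →
      E.card < (sverts E).card := by
  intro E
  induction E using Finset.strongInduction with
  | _ E ih =>
    intro hE hne
    obtain ⟨a, b, hab, he, hb, ha⟩ := exists_pendant hL hE hne
    have hbsv : b ∈ sverts E := mem_sverts.mpr ⟨_, he, by simp⟩
    have hasv : a ∈ sverts E := mem_sverts.mpr ⟨_, he, by simp⟩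
    have hE1 : 1 ≤ E.card := Finset.card_pos.mpr hne
    have hEe : (E.erase s(a, b)).card = E.card - 1 := Finset.card_erase_of_mem he
    have hE' : ∀ f ∈ E.erase s(a, b), f ∈ segAP L :=
      fun f hf => hE f (Finset.mem_of_mem_erase hf)
    by_cases hd : ∃ f ∈ E.erase s(a, b), a ∈ f
    · have hE'ne : (E.erase s(a, b)).Nonempty := by
        obtain ⟨f, hf, -⟩ := hd
        exact ⟨f, hf⟩
      have hih := ih _ (Finset.erase_ssubset he) hE' hE'ne
      rw [sverts_erase_deg2 hab he hb hd, Finset.card_erase_of_mem hbsv, hEe] at hih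
      omega
    · rcases (E.erase s(a, b)).eq_empty_or_nonempty with hE'e | hE'ne
      · have h2 : 2 ≤ (sverts E).card := Finset.one_lt_card.mpr ⟨a, hasv, b, hbsv, hab⟩
        have h1 : E.card - 1 = 0 := by rw [← hEe, hE'e]; rfl
        omega
      · have hih := ih _ (Finset.erase_ssubset he) hE' hE'ne
        have hpair : ({a, b} : Finset α) ⊆ sverts E := by
          intro x hx
          rcases Finset.mem_insert.mp hx with rfl | hx
          · exact hasv
          · rw [Finset.mem_singleton.mp hx]
            exact hbsv
        rw [sverts_erase_deg1 hab he hb hd, Finset.card_sdiff_of_subset hpair,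
          Finset.card_pair hab, hEe] at hih
        omega

theorem goodCount_formula (L : List α) (hL : L.Nodup) :
    ∀ E : Finset (Sym2 α), (∀ f ∈ E, f ∈ segAP L) → ∀ V : Finset α, sverts E ⊆ V →
      (goodFinset V E).card
        = 2 ^ ((sverts E).card - E.card) * Nat.factorial (V.card - E.card) := by
  intro E
  induction E using Finset.strongInduction with
  | _ E ih =>
    intro hE V hVE
    rcases E.eq_empty_or_nonempty with rfl | hne
    · have hsv : sverts (∅ : Finset (Sym2 α)) = ∅ := rfl
      rw [goodCount_empty V, hsv]
      simp
    · obtain ⟨a, b, hab, he, hb, ha⟩ := exists_pendant hL hE hne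
      have hbsv : b ∈ sverts E := mem_sverts.mpr ⟨_, he, by simp⟩
      have hasv : a ∈ sverts E := mem_sverts.mpr ⟨_, he, by simp⟩
      have hbV : b ∈ V := hVE hbsv
      have haV : a ∈ V := hVE hasv
      have hE' : ∀ f ∈ E.erase s(a, b), f ∈ segAP L :=
        fun f hf => hE f (Finset.mem_of_mem_erase hf)
      have hVE' : sverts (E.erase s(a, b)) ⊆ V.erase b := by
        intro v hv
        have hvb : v ≠ b := by
          obtain ⟨f, hf, hvf⟩ := mem_sverts.mp hv
          rintro rfl
          exact Finset.ne_of_mem_erase hf (hb f (Finset.mem_of_mem_erase hf) hvf)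
        exact Finset.mem_erase.mpr ⟨hvb, hVE (sverts_mono (Finset.erase_subset _ _) hv)⟩
      have hmap : ∀ l ∈ goodFinset V E,
          l.erase b ∈ goodFinset (V.erase b) (E.erase s(a, b)) := fun l hl =>
        mem_goodFinset.mpr (GoodL_erase hab he hb (mem_goodFinset.mp hl))
      have hsum := Finset.card_eq_sum_card_fiberwise hmap
      have hfib : ∀ l' ∈ goodFinset (V.erase b) (E.erase s(a, b)),
          ((goodFinset V E).filter (fun l => l.erase b = l')).card
            = if ∃ f ∈ E.erase s(a, b), a ∈ f then 1 else 2 := fun l' hl' =>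
        fiber_card hab he hbV haV hb ha (mem_goodFinset.mp hl')
      rw [Finset.sum_congr rfl hfib, Finset.sum_const, smul_eq_mul] at hsum
      have hrec := ih _ (Finset.erase_ssubset he) hE' (V.erase b) hVE'
      have hVb : (V.erase b).card = V.card - 1 := Finset.card_erase_of_mem hbV
      have hEe : (E.erase s(a, b)).card = E.card - 1 := Finset.card_erase_of_mem he
      have hE1 : 1 ≤ E.card := Finset.card_pos.mpr hne
      have hV1 : 1 ≤ V.card := Finset.card_pos.mpr ⟨b, hbV⟩
      by_cases hd : ∃ f ∈ E.erase s(a, b), a ∈ f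
      · rw [if_pos hd] at hsum
        rw [sverts_erase_deg2 hab he hb hd, Finset.card_erase_of_mem hbsv, hVb, hEe] at hrec
        have hsv1 : 1 ≤ (sverts E).card := Finset.card_pos.mpr ⟨b, hbsv⟩
        have e1 : (sverts E).card - 1 - (E.card - 1) = (sverts E).card - E.card := by omega
        have e2 : V.card - 1 - (E.card - 1) = V.card - E.card := by omega
        rw [hsum, hrec, e1, e2, mul_one]
      · rw [if_neg hd] at hsum
        have hpair : ({a, b} : Finset α) ⊆ sverts E := by
          intro x hx
          rcases Finset.mem_insert.mp hx with rfl | hx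
          · exact hasv
          · rw [Finset.mem_singleton.mp hx]
            exact hbsv
        rw [sverts_erase_deg1 hab he hb hd, Finset.card_sdiff_of_subset hpair,
          Finset.card_pair hab, hVb, hEe] at hrec
        have hlt : E.card < (sverts E).card := card_lt_sverts L hL E hE hne
        have e1 : (sverts E).card - E.card = ((sverts E).card - 2 - (E.card - 1)) + 1 := by
          omega
        have e2 : V.card - 1 - (E.card - 1) = V.card - E.card := by omega
        rw [hsum, hrec, e1, e2, pow_succ]
        ring

lemma mem_bpAdj_iff {n : ℕ} {x : Equiv.Perm (Fin n)} {f : Sym2 (Fin n)} :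
    f ∈ bpAdj x ↔ f ∈ segAP (List.ofFn x) := by
  rw [bpAdj, Finset.mem_image, mem_segAP_iff_getElem]
  constructor
  · rintro ⟨i, -, rfl⟩
    have hi := i.isLt
    refine ⟨i.val, by rw [List.length_ofFn]; omega, ?_⟩
    rw [List.getElem_ofFn, List.getElem_ofFn]
  · rintro ⟨j, h, rfl⟩
    have hln : (List.ofFn x).length = n := List.length_ofFn
    refine ⟨⟨j, by omega⟩, Finset.mem_univ _, ?_⟩
    rw [List.getElem_ofFn, List.getElem_ofFn]

lemma perm_count_eq (n : ℕ) (I : Finset (Sym2 (Fin n))) :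
    (Finset.univ.filter (fun x : Equiv.Perm (Fin n) => I ⊆ bpAdj x)).card
      = (goodFinset (Finset.univ : Finset (Fin n)) I).card := by
  refine Finset.card_bij (fun x _ => List.ofFn x) ?_ ?_ ?_
  · intro x hx
    rw [Finset.mem_filter] at hx
    apply mem_goodFinset.mpr
    refine ⟨List.nodup_ofFn.mpr x.injective, ?_, ?_⟩
    · ext v
      simp only [List.mem_toFinset, List.mem_ofFn, Finset.mem_univ, iff_true]
      exact ⟨x.symm v, by simp⟩
    · intro f hf
      exact mem_bpAdj_iff.mp (hx.2 hf)
  · intro x hx y hy hxy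
    exact Equiv.coe_fn_injective (List.ofFn_inj.mp hxy)
  · intro l hl
    have hg := mem_goodFinset.mp hl
    have hlen : l.length = n := by
      have h2 := List.toFinset_card_of_nodup hg.1
      rw [hg.2.1] at h2
      simpa using h2.symm
    have hinj : Function.Injective (fun i : Fin n => l.get (Fin.cast hlen.symm i)) := by
      intro i j hij
      have h3 := (List.nodup_iff_injective_get.mp hg.1) hij
      exact Fin.cast_injective hlen.symm h3
    set x : Equiv.Perm (Fin n) :=
      Equiv.ofBijective _ ((Finite.injective_iff_bijective).mp hinj) with hxdef
    have hofn : List.ofFn x = l := by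
      apply List.ext_getElem (by simp [hlen])
      intro i h1 h2
      rw [List.getElem_ofFn]
      show l.get (Fin.cast hlen.symm ⟨i, by simpa using h1⟩) = l[i]
      simp [List.get_eq_getElem]
    refine ⟨x, ?_, hofn⟩
    rw [Finset.mem_filter]
    refine ⟨Finset.mem_univ _, fun f hf => ?_⟩
    rw [mem_bpAdj_iff, hofn]
    exact hg.2.2 f hf

end SegmentCounting

section NumSegmentsCompute

variable {n : ℕ} (π : Equiv.Perm (Fin n)) (I : Finset (Sym2 (Fin n)))

/-- There is an edge of `I` between positions `j` and `j+1` of `π`. -/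
def edgeAt (j : ℕ) : Prop :=
  if h : j + 1 < n then s(π ⟨j, by omega⟩, π ⟨j + 1, h⟩) ∈ I else False

instance : DecidablePred (edgeAt π I) := fun j => by unfold edgeAt; infer_instance

lemma edgeAt_lt {j : ℕ} (h : edgeAt π I j) : j + 1 < n := by
  by_contra hc
  rw [edgeAt, dif_neg hc] at h
  exact h

lemma edgeAt_mem {j : ℕ} (h : edgeAt π I j) (h1 : j + 1 < n) :
    s(π ⟨j, by omega⟩, π ⟨j + 1, h1⟩) ∈ I := by
  rw [edgeAt, dif_pos h1] at h
  exact h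

lemma edgeAt_of_mem {j : ℕ} (h1 : j + 1 < n)
    (h : s(π ⟨j, by omega⟩, π ⟨j + 1, h1⟩) ∈ I) : edgeAt π I j := by
  rw [edgeAt, dif_pos h1]
  exact h

/-- The leader (leftmost position of the run) of position `j`. -/
def lead : ℕ → ℕ
  | 0 => 0
  | j + 1 => if edgeAt π I j then lead j else j + 1

lemma lead_zero : lead π I 0 = 0 := rfl

lemma lead_succ (j : ℕ) : lead π I (j + 1) = if edgeAt π I j then lead π I j else j + 1 := rfl

lemma lead_le (j : ℕ) : lead π I j ≤ j := by
  induction j with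
  | zero => exact le_refl 0
  | succ j ih =>
    rw [lead_succ]
    by_cases h : edgeAt π I j
    · rw [if_pos h]; omega
    · rw [if_neg h]

lemma lead_lead (j : ℕ) : lead π I (lead π I j) = lead π I j := by
  induction j with
  | zero => rfl
  | succ j ih =>
    rw [lead_succ]
    by_cases h : edgeAt π I j
    · rw [if_pos h]; exact ih
    · rw [if_neg h, lead_succ, if_neg h]

lemma lead_succ_lt_iff (j : ℕ) : lead π I (j + 1) < j + 1 ↔ edgeAt π I j := by
  by_cases h : edgeAt π I j
  · rw [lead_succ, if_pos h]
    have := lead_le π I j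
    simp [h]
    omega
  · rw [lead_succ, if_neg h]
    simp [h]

lemma lead_lt_ne_zero {j : ℕ} (h : lead π I j < j) : 0 < j := by
  by_contra hc
  have : j = 0 := by omega
  subst this
  simp [lead_zero] at h

lemma edgeAt_lead {j : ℕ} (h : lead π I j < j) : edgeAt π I (lead π I j) := by
  induction j with
  | zero => simp [lead_zero] at h
  | succ j ih =>
    by_cases hp : edgeAt π I j
    · rw [lead_succ, if_pos hp]
      rcases lt_or_eq_of_le (lead_le π I j) with hlt | heq
      · exact ih hlt
      · rw [heq]; exact hp
    · rw [lead_succ, if_neg hp] at h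
      omega

lemma lead_lt_n {j : ℕ} (hj : j < n) : lead π I j < n := by
  have := lead_le π I j
  omega

lemma lead_reachable (j : ℕ) (hj : j < n) :
    (SimpleGraph.fromEdgeSet (↑I : Set (Sym2 (Fin n)))).Reachable
      (π ⟨lead π I j, lead_lt_n π I hj⟩) (π ⟨j, hj⟩) := by
  induction j with
  | zero => exact SimpleGraph.Reachable.refl _
  | succ j ih =>
    by_cases h : edgeAt π I j
    · have h1 : j + 1 < n := edgeAt_lt π I h
      have hadj : (SimpleGraph.fromEdgeSet (↑I : Set (Sym2 (Fin n)))).Adj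
          (π ⟨j, by omega⟩) (π ⟨j + 1, h1⟩) := by
        rw [SimpleGraph.fromEdgeSet_adj]
        refine ⟨by exact_mod_cast edgeAt_mem π I h h1, ?_⟩
        intro hEq
        have h2 := π.injective hEq
        rw [Fin.mk.injEq] at h2
        omega
      have hl : lead π I (j + 1) = lead π I j := by rw [lead_succ, if_pos h]
      have hrw : (⟨lead π I (j + 1), lead_lt_n π I hj⟩ : Fin n)
          = ⟨lead π I j, lead_lt_n π I (by omega)⟩ := by
        apply Fin.ext
        exact hl
      rw [hrw]
      exact (ih (by omega)).trans hadj.reachable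
    · have hl : lead π I (j + 1) = j + 1 := by rw [lead_succ, if_neg h]
      have hrw : (⟨lead π I (j + 1), lead_lt_n π I hj⟩ : Fin n) = ⟨j + 1, hj⟩ := by
        apply Fin.ext
        exact hl
      rw [hrw]

/-- The leader vertex of a vertex. -/
def leadV (v : Fin n) : Fin n :=
  π ⟨lead π I (π.symm v).val, lead_lt_n π I (π.symm v).isLt⟩

lemma leadV_apply (j : ℕ) (hj : j < n) :
    leadV π I (π ⟨j, hj⟩) = π ⟨lead π I j, lead_lt_n π I hj⟩ := by
  rw [leadV]
  congr 1
  apply Fin.ext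
  simp

lemma leadV_adj (hI : I ⊆ bpAdj π) {v w : Fin n}
    (h : (SimpleGraph.fromEdgeSet (↑I : Set (Sym2 (Fin n)))).Adj v w) :
    leadV π I v = leadV π I w := by
  rw [SimpleGraph.fromEdgeSet_adj] at h
  obtain ⟨hmem, hne⟩ := h
  have hmem' : s(v, w) ∈ I := by exact_mod_cast hmem
  obtain ⟨i, -, heq⟩ := Finset.mem_image.mp (hI hmem')
  have hi := i.isLt
  have h1 : i.val + 1 < n := by omega
  have hedge : edgeAt π I i.val := edgeAt_of_mem π I h1 (by
    have : s(π ⟨i.val, by omega⟩, π ⟨i.val + 1, h1⟩) = s(v, w) := heq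
    rw [this]
    exact hmem')
  have hlead : lead π I (i.val + 1) = lead π I i.val := by rw [lead_succ, if_pos hedge]
  have hgoal : leadV π I (π ⟨i.val, by omega⟩) = leadV π I (π ⟨i.val + 1, h1⟩) := by
    rw [leadV_apply, leadV_apply]
    congr 1
    apply Fin.ext
    exact hlead.symm
  rcases Sym2.eq_iff.mp heq with ⟨hv, hw⟩ | ⟨hv, hw⟩
  · rw [← hv, ← hw]
    exact hgoal
  · rw [← hv, ← hw]
    exact hgoal.symm

lemma leadV_reach (hI : I ⊆ bpAdj π) {v w : Fin n}
    (h : (SimpleGraph.fromEdgeSet (↑I : Set (Sym2 (Fin n)))).Reachable v w) :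
    leadV π I v = leadV π I w := by
  obtain ⟨p⟩ := h
  induction p with
  | nil => rfl
  | cons hadj p ih => exact (leadV_adj π I hI hadj).trans ih

lemma leadV_leadV (v : Fin n) : leadV π I (leadV π I v) = leadV π I v := by
  have h1 : (π.symm (leadV π I v)).val = lead π I (π.symm v).val :=
    congrArg Fin.val (π.symm_apply_apply _)
  exact congrArg π (Fin.ext (by
    show lead π I (π.symm (leadV π I v)).val = lead π I (π.symm v).val
    rw [h1, lead_lead]))

lemma eta_apply (v : Fin n) : π ⟨(π.symm v).val, (π.symm v).isLt⟩ = v := by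
  have : (⟨(π.symm v).val, (π.symm v).isLt⟩ : Fin n) = π.symm v := Fin.ext rfl
  rw [this]
  exact π.apply_symm_apply v

lemma leadV_mem_sverts (hI : I ⊆ bpAdj π) {v : Fin n} (hv : v ∈ sverts I) :
    leadV π I v ∈ sverts I := by
  set j := (π.symm v).val with hjdef
  rcases lt_or_eq_of_le (lead_le π I j) with hlt | heqq
  · have hedge : edgeAt π I (lead π I j) := edgeAt_lead π I hlt
    have h1 : lead π I j + 1 < n := edgeAt_lt π I hedge
    refine mem_sverts.mpr ⟨s(π ⟨lead π I j, by omega⟩, π ⟨lead π I j + 1, h1⟩),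
      edgeAt_mem π I hedge h1, ?_⟩
    rw [leadV]
    rw [Sym2.mem_iff]
    left
    congr 1
  · have hfix : leadV π I v = v := by
      have h2 : leadV π I v = π ⟨j, (π.symm v).isLt⟩ :=
        congrArg π (Fin.ext (by
          show lead π I (π.symm v).val = j
          rw [← hjdef, heqq]))
      rw [h2]
      exact eta_apply π v
    rw [hfix]
    exact hv

lemma leadV_reachable (v : Fin n) :
    (SimpleGraph.fromEdgeSet (↑I : Set (Sym2 (Fin n)))).Reachable (leadV π I v) v := by
  have h := lead_reachable π I (π.symm v).val (π.symm v).isLt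
  rw [eta_apply π v] at h
  exact h

lemma numSegments_eq_leaders (hI : I ⊆ bpAdj π) :
    numSegments I = ((sverts I).filter (fun v => leadV π I v = v)).card := by
  classical
  rw [numSegments]
  set G := SimpleGraph.fromEdgeSet (↑I : Set (Sym2 (Fin n))) with hG
  set Λ := (sverts I).filter (fun v => leadV π I v = v) with hΛ
  have hmemΛ : ∀ v, v ∈ Λ ↔ v ∈ sverts I ∧ leadV π I v = v := by
    intro v
    rw [hΛ, Finset.mem_filter]
  set F : G.ConnectedComponent → Fin n :=
    SimpleGraph.ConnectedComponent.lift (leadV π I)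
      (fun v w p _ => leadV_reach π I hI ⟨p⟩) with hF
  have hFmk : ∀ v, F (G.connectedComponentMk v) = leadV π I v := fun v => rfl
  have hEquiv : {c : G.ConnectedComponent //
      ∃ v : Fin n, (∃ e ∈ I, v ∈ e) ∧ G.connectedComponentMk v = c} ≃ {v // v ∈ Λ} := by
    refine ⟨fun c => ⟨F c.1, ?_⟩, fun v => ⟨G.connectedComponentMk v.1, ⟨v.1, ?_, rfl⟩⟩,
      ?_, ?_⟩
    · obtain ⟨v, hv, hmk⟩ := c.2
      rw [← hmk, hFmk]
      rw [hmemΛ]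
      exact ⟨leadV_mem_sverts π I hI (mem_sverts.mpr hv), leadV_leadV π I v⟩
    · exact mem_sverts.mp ((hmemΛ v.1).mp v.2).1
    · rintro ⟨c, hc⟩
      obtain ⟨v, hv, rfl⟩ := hc
      apply Subtype.ext
      show G.connectedComponentMk (F (G.connectedComponentMk v)) = G.connectedComponentMk v
      rw [hFmk]
      exact SimpleGraph.ConnectedComponent.sound (leadV_reachable π I v)
    · rintro ⟨v, hv⟩
      apply Subtype.ext
      show F (G.connectedComponentMk v) = v
      rw [hFmk]
      exact ((hmemΛ v).mp hv).2
  rw [Nat.card_congr hEquiv, Nat.card_eq_fintype_card, Fintype.card_coe]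

end NumSegmentsCompute

section NumSegmentsCount

variable {n : ℕ} (π : Equiv.Perm (Fin n)) (I : Finset (Sym2 (Fin n)))

def SNset : Finset ℕ := (Finset.range n).filter (edgeAt π I)

def Cset : Finset ℕ :=
  (Finset.range n).filter (fun j => edgeAt π I j ∨ (0 < j ∧ edgeAt π I (j - 1)))

lemma mem_SNset {j : ℕ} : j ∈ SNset π I ↔ edgeAt π I j := by
  rw [SNset, Finset.mem_filter, Finset.mem_range]
  refine ⟨fun h => h.2, fun h => ⟨?_, h⟩⟩
  have := edgeAt_lt π I h
  omega

lemma mem_Cset {j : ℕ} :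
    j ∈ Cset π I ↔ (edgeAt π I j ∨ (0 < j ∧ edgeAt π I (j - 1))) := by
  rw [Cset, Finset.mem_filter, Finset.mem_range]
  refine ⟨fun h => h.2, fun h => ⟨?_, h⟩⟩
  rcases h with h | ⟨h0, h⟩ <;> · have := edgeAt_lt π I h; omega

lemma mem_C_of_sverts (hI : I ⊆ bpAdj π) {v : Fin n} (hv : v ∈ sverts I) :
    (π.symm v).val ∈ Cset π I := by
  obtain ⟨f, hf, hvf⟩ := mem_sverts.mp hv
  obtain ⟨i, -, heq⟩ := Finset.mem_image.mp (hI hf)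
  have hi := i.isLt
  have h1 : i.val + 1 < n := by omega
  rw [← heq] at hf hvf
  have hedge : edgeAt π I i.val := edgeAt_of_mem π I h1 hf
  rw [mem_Cset]
  rcases Sym2.mem_iff.mp hvf with hveq | hveq
  · have hj : (π.symm v).val = i.val := by rw [hveq]; simp
    rw [hj]
    exact Or.inl hedge
  · have hj : (π.symm v).val = i.val + 1 := by rw [hveq]; simp
    rw [hj]
    exact Or.inr ⟨by omega, by simpa using hedge⟩

lemma mem_sverts_of_C {j : ℕ} (hj : j ∈ Cset π I) :
    ∃ h : j < n, π ⟨j, h⟩ ∈ sverts I := by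
  rcases (mem_Cset π I).mp hj with h | ⟨h0, h⟩
  · have h1 := edgeAt_lt π I h
    refine ⟨by omega, mem_sverts.mpr ⟨s(π ⟨j, by omega⟩, π ⟨j + 1, h1⟩),
      edgeAt_mem π I h h1, by rw [Sym2.mem_iff]; left; rfl⟩⟩
  · have h1 := edgeAt_lt π I h
    refine ⟨by omega, mem_sverts.mpr ⟨s(π ⟨j - 1, by omega⟩, π ⟨j - 1 + 1, h1⟩),
      edgeAt_mem π I h h1, ?_⟩⟩
    rw [Sym2.mem_iff]
    right
    exact congrArg π (Fin.ext (show j = j - 1 + 1 by omega))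

lemma symm_val_injective : ∀ v1 ∈ sverts I, ∀ v2 ∈ sverts I,
    (π.symm v1).val = (π.symm v2).val → v1 = v2 := by
  intro v1 _ v2 _ h
  exact π.symm.injective (Fin.ext h)

lemma sverts_card_eq (hI : I ⊆ bpAdj π) : (sverts I).card = (Cset π I).card := by
  refine Finset.card_bij (fun v _ => (π.symm v).val)
    (fun v hv => mem_C_of_sverts π I hI hv) (symm_val_injective π I) ?_
  intro j hj
  obtain ⟨h, hmem⟩ := mem_sverts_of_C π I hj
  exact ⟨π ⟨j, h⟩, hmem, by simp⟩

lemma leaders_card_eq (hI : I ⊆ bpAdj π) :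
    ((sverts I).filter (fun v => leadV π I v = v)).card
      = ((Cset π I).filter (fun j => lead π I j = j)).card := by
  refine Finset.card_bij (fun v _ => (π.symm v).val) ?_ ?_ ?_
  · intro v hv
    rw [Finset.mem_filter] at hv ⊢
    refine ⟨mem_C_of_sverts π I hI hv.1, ?_⟩
    have h1 : (π.symm (leadV π I v)).val = lead π I (π.symm v).val :=
      congrArg Fin.val (π.symm_apply_apply _)
    have h3 : (π.symm (leadV π I v)).val = (π.symm v).val :=
      congrArg (fun u : Fin n => (π.symm u).val) hv.2
    rw [h1] at h3
    exact h3
  · intro v1 h1 v2 h2 heq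
    exact symm_val_injective π I v1 (Finset.mem_of_mem_filter _ h1) v2
      (Finset.mem_of_mem_filter _ h2) heq
  · intro j hj
    rw [Finset.mem_filter] at hj
    obtain ⟨h, hmem⟩ := mem_sverts_of_C π I hj.1
    refine ⟨π ⟨j, h⟩, ?_, by simp⟩
    rw [Finset.mem_filter]
    refine ⟨hmem, ?_⟩
    rw [leadV_apply]
    exact congrArg π (Fin.ext (by simpa using hj.2))

lemma I_card_eq (hI : I ⊆ bpAdj π) : I.card = (SNset π I).card := by
  refine (Finset.card_bij
    (fun j hj => s(π ⟨j, by have := edgeAt_lt π I ((mem_SNset π I).mp hj); omega⟩,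
      π ⟨j + 1, edgeAt_lt π I ((mem_SNset π I).mp hj)⟩)) ?_ ?_ ?_).symm
  · intro j hj
    exact edgeAt_mem π I ((mem_SNset π I).mp hj) _
  · intro j1 h1 j2 h2 heq
    rcases Sym2.eq_iff.mp heq with ⟨ha, -⟩ | ⟨ha, hb⟩
    · have := π.injective ha
      rw [Fin.mk.injEq] at this
      exact this
    · have e1 := π.injective ha
      have e2 := π.injective hb
      rw [Fin.mk.injEq] at e1 e2
      omega
  · intro f hf
    obtain ⟨i, -, heq⟩ := Finset.mem_image.mp (hI hf)
    have hi := i.isLt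
    have h1 : i.val + 1 < n := by omega
    rw [← heq] at hf
    have hedge : edgeAt π I i.val := edgeAt_of_mem π I h1 hf
    exact ⟨i.val, (mem_SNset π I).mpr hedge, heq⟩

lemma C_card_split : (Cset π I).card
    = ((Cset π I).filter (fun j => lead π I j = j)).card + (SNset π I).card := by
  have himg : Cset π I
      = ((Cset π I).filter (fun j => lead π I j = j)) ∪ (SNset π I).image (· + 1) := by
    ext j
    simp only [Finset.mem_union, Finset.mem_filter, Finset.mem_image]
    constructor
    · intro hj
      by_cases hl : lead π I j = j
      · exact Or.inl ⟨hj, hl⟩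
      · have hlt : lead π I j < j := lt_of_le_of_ne (lead_le π I j) hl
        have hpos : 0 < j := lead_lt_ne_zero π I hlt
        obtain ⟨j', rfl⟩ : ∃ j', j = j' + 1 := ⟨j - 1, by omega⟩
        have hedge : edgeAt π I j' := (lead_succ_lt_iff π I j').mp hlt
        exact Or.inr ⟨j', (mem_SNset π I).mpr hedge, rfl⟩
    · rintro (⟨hj, -⟩ | ⟨j', hj', rfl⟩)
      · exact hj
      · have hedge := (mem_SNset π I).mp hj'
        rw [mem_Cset]
        exact Or.inr ⟨by omega, by simpa using hedge⟩
  have hdisj : Disjoint ((Cset π I).filter (fun j => lead π I j = j))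
      ((SNset π I).image (· + 1)) := by
    rw [Finset.disjoint_left]
    rintro j hj hj2
    obtain ⟨j', hj', rfl⟩ := Finset.mem_image.mp hj2
    rw [Finset.mem_filter] at hj
    have := (lead_succ_lt_iff π I j').mpr ((mem_SNset π I).mp hj')
    omega
  conv_lhs => rw [himg]
  rw [Finset.card_union_of_disjoint hdisj,
    Finset.card_image_of_injective _ (fun a b h => by omega)]

lemma numSegments_formula (hI : I ⊆ bpAdj π) :
    numSegments I = (sverts I).card - I.card := by
  rw [numSegments_eq_leaders π I hI, leaders_card_eq π I hI, sverts_card_eq π I hI,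
    I_card_eq π I hI]
  have := C_card_split π I
  omega

end NumSegmentsCount

/-- A segment set with m adjacencies and k segments is contained in exactly
2^k · (n-m)! permutations. -/
theorem card_permutations_containing_segment_set (n : ℕ) (I : Finset (Sym2 (Fin n)))
    (π : Equiv.Perm (Fin n)) (hI : I ⊆ bpAdj π) (m k : ℕ)
    (hm : I.card = m) (hk : numSegments I = k) :
    (Finset.univ.filter (fun x : Equiv.Perm (Fin n) => I ⊆ bpAdj x)).card
      = 2 ^ k * (n - m).factorial := by
  subst hm
  subst hk
  rw [perm_count_eq n I]
  have hL : (List.ofFn π).Nodup := List.nodup_ofFn.mpr π.injective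
  have hIseg : ∀ f ∈ I, f ∈ segAP (List.ofFn π) := fun f hf => mem_bpAdj_iff.mp (hI hf)
  rw [goodCount_formula (List.ofFn π) hL I hIseg Finset.univ (Finset.subset_univ _),
    numSegments_formula π I hI, Finset.card_univ, Fintype.card_fin]
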